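/- Let G be a tensor whose characteristic matrix is block lower triangular: G(s) = [[G1(s), 0],[G2(s), G3(s)]], where G1 and G3 are nondegenerate characteristic matrices. Then R[G] ≥ R[G1] + (column rank of G3(s)) and R[G] ≥ R[G3] + (row rank of G1(s)). -/

import Mathlib

open scoped BigOperators

noncomputable def tRank (F : Type) [Field F] {I J K : Type} [Fintype I] [Fintype J] [Fintype K]
    (A : I → J → K → F) : ℕ :=
  sInf {m | ∃ x : Fin m → I → F, ∃ y : Fin m → J → F, ∃ z : Fin m → K → F,
    ∀ i j k, A i j k = ∑ t, x t i * y t j * z t k}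

noncomputable def charMatrix {F : Type} [Field F] {I J K : Type} [Fintype K]
    (A : I → J → K → F) : Matrix I J (MvPolynomial K F) :=
  Matrix.of fun i j => ∑ k, MvPolynomial.X k * MvPolynomial.C (A i j k)

noncomputable def colRank (F : Type) [Field F] {I J K : Type} [Fintype I] [Fintype J] [Fintype K]
    (A : I → J → K → F) : ℕ :=
  ((charMatrix A).map
    (algebraMap (MvPolynomial K F) (FractionRing (MvPolynomial K F)))).rank

noncomputable def rowRank (F : Type) [Field F] {I J K : Type} [Fintype I] [Fintype J] [Fintype K]
    (A : I → J → K → F) : ℕ :=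
  (((charMatrix A).transpose).map
    (algebraMap (MvPolynomial K F) (FractionRing (MvPolynomial K F)))).rank

/-- A tensor is nondegenerate if no nontrivial linear combination of its slices vanishes
and its characteristic matrix has full row and column rank. -/
def Nondeg (F : Type) [Field F] {I J K : Type} [Fintype I] [Fintype J] [Fintype K]
    (A : I → J → K → F) : Prop :=
  (∀ c : K → F, (∀ i j, ∑ k, c k * A i j k = 0) → c = 0) ∧
  rowRank F A = Fintype.card I ∧ colRank F A = Fintype.card J

section AuxLemmas

open MvPolynomial

variable (F : Type) [Field F]


variable (F : Type) [Field F]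

/-- Substitution lemma: given a vanishing trilinear relation, we can find a finite
independent subfamily of `v` through which everything is expressed. -/
lemma subst_lemma {m n n' cc : ℕ} (p : Fin m → Fin n → F) (v : Fin m → Fin n' → F)
    (z : Fin m → Fin cc → F)
    (hzero : ∀ i j k, ∑ t, p t i * v t j * z t k = 0) :
    ∃ (T : Finset (Fin m)) (cf : Fin m → {τ // τ ∈ T} → F),
      (∀ t j, v t j = ∑ τ, cf t τ * v τ.1 j) ∧
      (∀ t (ht : t ∈ T), cf t = Pi.single ⟨t, ht⟩ 1) ∧
      (∀ (τ : {τ // τ ∈ T}) i k, ∑ t, cf t τ * (p t i * z t k) = 0) := by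
  classical
  obtain ⟨I, hli, hmax⟩ := exists_maximal_linearIndepOn F v
  have hIfin : I.Finite := Set.toFinite I
  refine ⟨hIfin.toFinset, ?_⟩
  set T := hIfin.toFinset with hT
  have hmemT : ∀ t, t ∈ T ↔ t ∈ I := fun t => hIfin.mem_toFinset
  -- linear independence transported to the `T`-subtype
  have hliT : LinearIndependent F (fun τ : {τ // τ ∈ T} => v τ.1) :=
    hli.comp (fun τ : {τ // τ ∈ T} => (⟨τ.1, (hmemT τ.1).1 τ.2⟩ : I))
      (fun x y hxy => Subtype.ext (Subtype.mk_eq_mk.mp hxy))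
  -- every v t lies in the span of the T-family
  have hspan : ∀ t, v t ∈ Submodule.span F (Set.range (fun τ : {τ // τ ∈ T} => v τ.1)) := by
    intro t
    have hrange : Set.range (fun τ : {τ // τ ∈ T} => v τ.1) = v '' I := by
      rw [← hIfin.coe_toFinset, ← hT, Set.image_eq_range]
      rfl
    rw [hrange]
    by_cases ht : t ∈ I
    · exact Submodule.subset_span ⟨t, ht, rfl⟩
    · obtain ⟨aa, ha0, hamem⟩ := hmax t ht
      have := Submodule.smul_mem _ aa⁻¹ hamem
      rwa [smul_smul, inv_mul_cancel₀ ha0, one_smul] at this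
  have hrep : ∀ t, ∃ cfun : {τ // τ ∈ T} → F, ∑ τ, cfun τ • v τ.1 = v t := by
    intro t
    exact (Submodule.mem_span_range_iff_exists_fun F).1 (hspan t)
  set cf : Fin m → {τ // τ ∈ T} → F :=
    fun t => if ht : t ∈ T then Pi.single ⟨t, ht⟩ 1 else (hrep t).choose with hcf
  have hrep' : ∀ t j, v t j = ∑ τ, cf t τ * v τ.1 j := by
    intro t j
    by_cases ht : t ∈ T
    · simp only [hcf, dif_pos ht]
      rw [Finset.sum_congr rfl (fun τ _ => by rw [Pi.single_apply])]
      simp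
    · have := (hrep t).choose_spec
      have := congrFun this j
      simp only [Finset.sum_apply, Pi.smul_apply, smul_eq_mul] at this
      simp only [hcf, dif_neg ht]
      exact this.symm
  refine ⟨cf, hrep', fun t ht => by simp [hcf, dif_pos ht], ?_⟩
  intro τ0 i k
  set g : {τ // τ ∈ T} → F := fun τ => ∑ t, cf t τ * (p t i * z t k) with hg
  have hsum : ∑ τ, g τ • v τ.1 = 0 := by
    funext j
    simp only [Finset.sum_apply, Pi.smul_apply, smul_eq_mul, Pi.zero_apply, hg]
    calc ∑ τ, (∑ t, cf t τ * (p t i * z t k)) * v τ.1 j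
        = ∑ τ, ∑ t, (p t i * z t k) * (cf t τ * v τ.1 j) := by
          refine Finset.sum_congr rfl fun τ _ => ?_
          rw [Finset.sum_mul]
          exact Finset.sum_congr rfl fun t _ => by ring
      _ = ∑ t, ∑ τ, (p t i * z t k) * (cf t τ * v τ.1 j) := Finset.sum_comm
      _ = ∑ t, (p t i * z t k) * v t j := by
          refine Finset.sum_congr rfl fun t _ => ?_
          rw [← Finset.mul_sum, ← hrep' t j]
      _ = ∑ t, p t i * v t j * z t k := Finset.sum_congr rfl fun t _ => by ring
      _ = 0 := hzero i j k
  exact Fintype.linearIndependent_iff.1 hliT g hsum τ0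
lemma rank_le_of_rep {n1 n2 cc m : ℕ}
    (M : Matrix (Fin n1) (Fin n2) (MvPolynomial (Fin cc) F))
    (q : Fin m → Fin n1 → F) (v : Fin m → Fin n2 → F) (z : Fin m → Fin cc → F)
    (T : Finset (Fin m)) (cf : Fin m → {τ // τ ∈ T} → F)
    (hM : ∀ i j, M i j = ∑ k, MvPolynomial.X k * MvPolynomial.C (∑ t, q t i * v t j * z t k))
    (hrep : ∀ t j, v t j = ∑ τ, cf t τ * v τ.1 j) :
    (M.map (algebraMap (MvPolynomial (Fin cc) F)
      (FractionRing (MvPolynomial (Fin cc) F)))).rank ≤ T.card := by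
  classical
  have hR : True := trivial
  set A0 : Matrix (Fin n1) {τ // τ ∈ T} (MvPolynomial (Fin cc) F) :=
    Matrix.of (fun i τ => ∑ t, (∑ k, (X k : MvPolynomial (Fin cc) F) * C (z t k)) * C (q t i) * C (cf t τ)) with hA0
  set B0 : Matrix {τ // τ ∈ T} (Fin n2) (MvPolynomial (Fin cc) F) := Matrix.of (fun τ j => C (v τ.1 j)) with hB0
  have hfac : M = A0 * B0 := by
    refine Matrix.ext fun i j => ?_
    rw [Matrix.mul_apply, hM]
    calc ∑ k, (X k : MvPolynomial (Fin cc) F) * C (∑ t, q t i * v t j * z t k)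
        = ∑ k, ∑ t, (X k : MvPolynomial (Fin cc) F) * C (z t k) * C (q t i) * C (v t j) := by
          refine Finset.sum_congr rfl fun k _ => ?_
          rw [map_sum, Finset.mul_sum]
          refine Finset.sum_congr rfl fun t _ => ?_
          rw [map_mul, map_mul]
          ring
      _ = ∑ t, (∑ k, (X k : MvPolynomial (Fin cc) F) * C (z t k)) * C (q t i) * C (v t j) := by
          rw [Finset.sum_comm]
          refine Finset.sum_congr rfl fun t _ => ?_
          rw [Finset.sum_mul, Finset.sum_mul]
      _ = ∑ t, ∑ τ, (∑ k, (X k : MvPolynomial (Fin cc) F) * C (z t k)) * C (q t i) *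
            (C (cf t τ) * C (v τ.1 j)) := by
          refine Finset.sum_congr rfl fun t _ => ?_
          rw [← Finset.mul_sum]
          congr 1
          rw [hrep t j, map_sum]
          exact Finset.sum_congr rfl fun τ _ => map_mul _ _ _
      _ = ∑ τ, A0 i τ * B0 τ j := by
          rw [Finset.sum_comm]
          refine Finset.sum_congr rfl fun τ _ => ?_
          simp only [hA0, hB0, Matrix.of_apply, Finset.sum_mul]
          refine Finset.sum_congr rfl fun t _ => by ring_nf; exact Finset.sum_congr rfl fun k _ => by ring
  rw [hfac, Matrix.map_mul]
  refine le_trans (Matrix.rank_mul_le_right _ _) ?_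
  refine le_trans (Matrix.rank_le_card_height _) (le_of_eq (Fintype.card_coe T))
lemma tRank_set_nonempty {n1 n2 : ℕ} {K : Type} [Fintype K] (A : Fin n1 → Fin n2 → K → F) :
    {m | ∃ x : Fin m → Fin n1 → F, ∃ y : Fin m → Fin n2 → F, ∃ z : Fin m → K → F,
      ∀ i j k, A i j k = ∑ t, x t i * y t j * z t k}.Nonempty := by
  classical
  refine ⟨n1 * n2, fun t i => if (finProdFinEquiv.symm t).1 = i then 1 else 0,
    fun t j => if (finProdFinEquiv.symm t).2 = j then 1 else 0,
    fun t k => A (finProdFinEquiv.symm t).1 (finProdFinEquiv.symm t).2 k, ?_⟩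
  intro i j k
  rw [← Equiv.sum_comp (finProdFinEquiv : Fin n1 × Fin n2 ≃ Fin (n1 * n2))]
  simp only [Equiv.symm_apply_apply]
  rw [Fintype.sum_prod_type]
  simp [Finset.sum_ite_eq, ite_mul, zero_mul, one_mul]

lemma tRank_swap_le {n1 n2 cc : ℕ} (A : Fin n1 → Fin n2 → Fin cc → F) :
    tRank F A ≤ tRank F (fun j i k => A i j k) := by
  obtain ⟨x, y, z, h⟩ := Nat.sInf_mem (tRank_set_nonempty F (fun j i k => A i j k))
  exact Nat.sInf_le ⟨y, x, z, fun i j k => by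
    rw [h j i k]; exact Finset.sum_congr rfl fun t _ => by ring⟩

lemma tRank_le_sub {n1 n2 cc m : ℕ} (A : Fin n1 → Fin n2 → Fin cc → F)
    (p : Fin m → Fin n1 → F) (u : Fin m → Fin n2 → F) (z : Fin m → Fin cc → F)
    (T : Finset (Fin m)) (cf : Fin m → {τ // τ ∈ T} → F)
    (hA : ∀ i j k, A i j k = ∑ t, p t i * u t j * z t k)
    (hind : ∀ t (ht : t ∈ T), cf t = Pi.single ⟨t, ht⟩ 1)
    (hkey : ∀ τ i k, ∑ t, cf t τ * (p t i * z t k) = 0) :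
    tRank F A ≤ Tᶜ.card := by
  classical
  set e : Fin Tᶜ.card ≃ {x // x ∈ Tᶜ} := Tᶜ.equivFin.symm with he
  refine Nat.sInf_le ⟨fun t' => p (e t').1,
    fun t' j => u (e t').1 j - ∑ τ, cf (e t').1 τ * u τ.1 j,
    fun t' => z (e t').1, ?_⟩
  intro i j k
  have h1 : ∀ τ : {τ // τ ∈ T}, ∑ t ∈ Tᶜ, cf t τ * (p t i * z t k)
      = -(p τ.1 i * z τ.1 k) := by
    intro τ
    have hfull := hkey τ i k
    rw [← Finset.sum_add_sum_compl T (fun t => cf t τ * (p t i * z t k))] at hfull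
    have hT : ∑ t ∈ T, cf t τ * (p t i * z t k) = p τ.1 i * z τ.1 k := by
      rw [← Finset.sum_coe_sort T (fun t => cf t τ * (p t i * z t k))]
      calc ∑ σ : {x // x ∈ T}, cf σ.1 τ * (p σ.1 i * z σ.1 k)
          = ∑ σ : {x // x ∈ T}, (if τ = σ then (1:F) else 0) * (p σ.1 i * z σ.1 k) := by
            refine Finset.sum_congr rfl fun σ _ => ?_
            rw [hind σ.1 σ.2, Pi.single_apply]
        _ = p τ.1 i * z τ.1 k := by
            simp [ite_mul, zero_mul, one_mul, Finset.sum_ite_eq]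
    linear_combination hfull - hT
  calc A i j k = ∑ t, p t i * u t j * z t k := hA i j k
    _ = ∑ t ∈ T, p t i * u t j * z t k + ∑ t ∈ Tᶜ, p t i * u t j * z t k :=
        (Finset.sum_add_sum_compl T _).symm
    _ = ∑ t' : Fin Tᶜ.card, p (e t').1 i *
          (u (e t').1 j - ∑ τ, cf (e t').1 τ * u τ.1 j) * z (e t').1 k := by
        rw [Equiv.sum_comp e (fun σ : {x // x ∈ Tᶜ} =>
          p σ.1 i * (u σ.1 j - ∑ τ, cf σ.1 τ * u τ.1 j) * z σ.1 k),
          Finset.sum_coe_sort Tᶜ (fun t => p t i * (u t j - ∑ τ, cf t τ * u τ.1 j) * z t k)]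
        have expand : ∀ t, p t i * (u t j - ∑ τ, cf t τ * u τ.1 j) * z t k
            = p t i * u t j * z t k - ∑ τ, u τ.1 j * (cf t τ * (p t i * z t k)) := by
          intro t
          rw [mul_sub, sub_mul]
          congr 1
          rw [Finset.mul_sum, Finset.sum_mul]
          exact Finset.sum_congr rfl fun τ _ => by ring
        rw [Finset.sum_congr rfl fun t _ => expand t, Finset.sum_sub_distrib,
          Finset.sum_comm]
        have h2 : ∑ τ : {τ // τ ∈ T}, ∑ t ∈ Tᶜ, u τ.1 j * (cf t τ * (p t i * z t k))
            = -∑ t ∈ T, p t i * u t j * z t k := by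
          rw [← Finset.sum_coe_sort T (fun t => p t i * u t j * z t k), ← Finset.sum_neg_distrib]
          refine Finset.sum_congr rfl fun τ _ => ?_
          rw [← Finset.mul_sum, h1 τ]
          ring
        rw [h2]
        ring

end AuxLemmas

theorem rank_block_lower_triangular (F : Type) [Field F] {a a' b b' c : ℕ}
    (G1 : Fin a → Fin b → Fin c → F) (G2 : Fin a' → Fin b → Fin c → F)
    (G3 : Fin a' → Fin b' → Fin c → F)
    (hG1 : Nondeg F G1) (hG3 : Nondeg F G3) :
    tRank F G1 + colRank F G3 ≤
      tRank F (fun (i : Fin (a + a')) (j : Fin (b + b')) (k : Fin c) =>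
        Fin.addCases
          (fun i1 => Fin.addCases (fun j1 => G1 i1 j1 k) (fun _ => (0 : F)) j)
          (fun i2 => Fin.addCases (fun j1 => G2 i2 j1 k) (fun j2 => G3 i2 j2 k) j) i) ∧
    tRank F G3 + rowRank F G1 ≤
      tRank F (fun (i : Fin (a + a')) (j : Fin (b + b')) (k : Fin c) =>
        Fin.addCases
          (fun i1 => Fin.addCases (fun j1 => G1 i1 j1 k) (fun _ => (0 : F)) j)
          (fun i2 => Fin.addCases (fun j1 => G2 i2 j1 k) (fun j2 => G3 i2 j2 k) j) i) := by
  classical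
  clear hG1 hG3
  set G : Fin (a + a') → Fin (b + b') → Fin c → F :=
    fun i j k =>
      Fin.addCases
        (fun i1 => Fin.addCases (fun j1 => G1 i1 j1 k) (fun _ => (0 : F)) j)
        (fun i2 => Fin.addCases (fun j1 => G2 i2 j1 k) (fun j2 => G3 i2 j2 k) j) i with hG
  obtain ⟨x, y, z, hx⟩ := Nat.sInf_mem (tRank_set_nonempty F G)
  -- block identities
  have hG1eq : ∀ i1 j1 k, G1 i1 j1 k =
      ∑ t, x t (Fin.castAdd a' i1) * y t (Fin.castAdd b' j1) * z t k := by
    intro i1 j1 k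
    have := hx (Fin.castAdd a' i1) (Fin.castAdd b' j1) k
    simpa only [hG, Fin.addCases_left, Fin.addCases_right] using this
  have hG3eq : ∀ i2 j2 k, G3 i2 j2 k =
      ∑ t, x t (Fin.natAdd a i2) * y t (Fin.natAdd b j2) * z t k := by
    intro i2 j2 k
    have := hx (Fin.natAdd a i2) (Fin.natAdd b j2) k
    simpa only [hG, Fin.addCases_left, Fin.addCases_right] using this
  have hzero : ∀ i1 j2 k,
      ∑ t, x t (Fin.castAdd a' i1) * y t (Fin.natAdd b j2) * z t k = 0 := by
    intro i1 j2 k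
    have := hx (Fin.castAdd a' i1) (Fin.natAdd b j2) k
    simpa only [hG, Fin.addCases_left, Fin.addCases_right] using this.symm
  constructor
  · -- first inequality
    obtain ⟨T, cf, hrep, hind, hkey⟩ := subst_lemma F
      (fun t i1 => x t (Fin.castAdd a' i1)) (fun t j2 => y t (Fin.natAdd b j2)) z hzero
    have hcol : colRank F G3 ≤ T.card := by
      refine rank_le_of_rep F (charMatrix G3)
        (fun t i2 => x t (Fin.natAdd a i2)) (fun t j2 => y t (Fin.natAdd b j2)) z T cf
        ?_ hrep
      intro i j
      simp only [charMatrix, Matrix.of_apply]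
      exact Finset.sum_congr rfl fun k _ => by rw [hG3eq i j k]
    have ht1 : tRank F G1 ≤ Tᶜ.card := by
      refine tRank_le_sub F G1
        (fun t i1 => x t (Fin.castAdd a' i1)) (fun t j1 => y t (Fin.castAdd b' j1)) z T cf
        hG1eq hind hkey
    calc tRank F G1 + colRank F G3 ≤ Tᶜ.card + T.card := Nat.add_le_add ht1 hcol
      _ = Fintype.card (Fin (tRank F G)) := Finset.card_compl_add_card T
      _ = tRank F G := Fintype.card_fin _
  · -- second inequality
    have hzero' : ∀ j2 i1 k,
        ∑ t, y t (Fin.natAdd b j2) * x t (Fin.castAdd a' i1) * z t k = 0 := by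
      intro j2 i1 k
      rw [← hzero i1 j2 k]
      exact Finset.sum_congr rfl fun t _ => by ring
    obtain ⟨T', cf', hrep', hind', hkey'⟩ := subst_lemma F
      (fun t j2 => y t (Fin.natAdd b j2)) (fun t i1 => x t (Fin.castAdd a' i1)) z hzero'
    have hrow : rowRank F G1 ≤ T'.card := by
      refine rank_le_of_rep F (charMatrix G1).transpose
        (fun t j1 => y t (Fin.castAdd b' j1)) (fun t i1 => x t (Fin.castAdd a' i1)) z T' cf'
        ?_ hrep'
      intro j i
      simp only [charMatrix, Matrix.transpose_apply, Matrix.of_apply]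
      refine Finset.sum_congr rfl fun k _ => ?_
      rw [hG1eq i j k]
      congr 1
      congr 1
      exact Finset.sum_congr rfl fun t _ => by ring
    have ht3 : tRank F G3 ≤ T'ᶜ.card := by
      refine le_trans (tRank_swap_le F G3) ?_
      refine tRank_le_sub F (fun j2 i2 k => G3 i2 j2 k)
        (fun t j2 => y t (Fin.natAdd b j2)) (fun t i2 => x t (Fin.natAdd a i2)) z T' cf'
        ?_ hind' hkey'
      intro j i k
      show G3 i j k = _
      rw [hG3eq i j k]
      exact Finset.sum_congr rfl fun t _ => by ring
    calc tRank F G3 + rowRank F G1 ≤ T'ᶜ.card + T'.card := Nat.add_le_add ht3 hrow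
      _ = Fintype.card (Fin (tRank F G)) := Finset.card_compl_add_card T'
      _ = tRank F G := Fintype.card_fin _
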